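/- arXiv:1101.0794 — 4 statements merged into one kernel-verified Lean document; each statement's English description precedes it below -/
import Mathlib

section
/- For the Bernoulli lemniscate domain Ω = {z ∈ ℂ : |z² - 1| < 1}, the even harmonic moments are M_{2k}(Ω) = 2^{2k+1}(k!)² / (π (2k+1)!), where M_m(Ω) = (1/π)∫_Ω z^m dA. -/
set_option autoImplicit false

open MeasureTheory Real

/-- The Bernoulli lemniscate domain Ω = {z : |z² - 1| < 1}. -/
noncomputable def bernoulliLemniscate : Set ℂ := {z : ℂ | ‖z ^ 2 - 1‖ < 1}

noncomputable section
open Complex Set Finset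


lemma sum_pf (n : ℕ) : ∀ (x : ℂ), (∀ j ≤ n, x + j ≠ 0) →
    ∑ j ∈ Finset.range (n+1), (-1:ℂ)^j * (n.choose j) / (x + j)
      = (n.factorial : ℂ) / ∏ j ∈ Finset.range (n+1), (x + j) := by
  induction n with
  | zero => intro x hx; simp
  | succ n ih =>
    intro x hx
    have hx0 : ∀ j ≤ n, x + j ≠ 0 := fun j hj => hx j (hj.trans (Nat.le_succ n))
    have hx1 : ∀ j ≤ n, (x+1) + j ≠ 0 := by
      intro j hj
      have h := hx (j+1) (by omega)
      have : x + 1 + (j:ℂ) = x + ((j:ℕ)+1 : ℕ) := by push_cast; ring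
      rw [this]; exact h
    have key : ∑ j ∈ Finset.range (n+2), (-1:ℂ)^j * ((n+1).choose j) / (x + j)
        = (∑ j ∈ Finset.range (n+1), (-1:ℂ)^j * (n.choose j) / (x + j))
          - ∑ j ∈ Finset.range (n+1), (-1:ℂ)^j * (n.choose j) / ((x+1) + j) := by
      rw [Finset.sum_range_succ' (fun j => (-1:ℂ)^j * ((n+1).choose j) / (x + j))]
      have split : ∀ i ∈ Finset.range (n+1),
          (-1:ℂ)^(i+1) * ((n+1).choose (i+1)) / (x + ((i:ℕ)+1:ℕ))
          = (-1:ℂ)^(i+1) * (n.choose (i+1)) / (x + ((i:ℕ)+1:ℕ))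
            - ((-1:ℂ)^i * (n.choose i) / ((x+1) + i)) := by
        intro i _
        rw [Nat.choose_succ_succ]
        have h1 : ((x:ℂ)+1) + i = x + ((i:ℕ)+1:ℕ) := by push_cast; ring
        rw [h1]
        push_cast
        rw [pow_succ]
        ring
      rw [Finset.sum_congr rfl split, Finset.sum_sub_distrib]
      have hA : ((-1:ℂ)^0 * ((n+1).choose 0) / (x + (0:ℕ)))
            + ∑ i ∈ Finset.range (n+1), (-1:ℂ)^(i+1) * (n.choose (i+1)) / (x + ((i:ℕ)+1:ℕ))
          = ∑ j ∈ Finset.range (n+1), (-1:ℂ)^j * (n.choose j) / (x + j) := by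
        rw [Finset.sum_range_succ (fun i => (-1:ℂ)^(i+1) * (n.choose (i+1)) / (x + ((i:ℕ)+1:ℕ)))]
        rw [Finset.sum_range_succ' (fun j => (-1:ℂ)^j * (n.choose j) / (x + j))]
        simp [Nat.choose_succ_self]
        ring
      rw [← hA]
      ring
    rw [key, ih x hx0, ih (x+1) hx1]
    -- now products
    have hP : (∏ j ∈ Finset.range (n+1), (x + j)) ≠ 0 :=
      Finset.prod_ne_zero_iff.2 fun j hj => hx0 j (Nat.lt_succ_iff.1 (Finset.mem_range.1 hj))
    have hQ : (∏ j ∈ Finset.range (n+1), ((x+1) + j)) ≠ 0 :=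
      Finset.prod_ne_zero_iff.2 fun j hj => hx1 j (Nat.lt_succ_iff.1 (Finset.mem_range.1 hj))
    have hrw : ∏ j ∈ Finset.range (n+2), (x + j)
        = (∏ j ∈ Finset.range (n+1), (x + j)) * (x + ((n+1:ℕ):ℂ)) :=
      Finset.prod_range_succ _ _
    have hrw2 : ∏ j ∈ Finset.range (n+2), (x + j)
        = x * ∏ j ∈ Finset.range (n+1), ((x+1) + j) := by
      rw [Finset.prod_range_succ' (fun j => x + (j:ℕ))]
      rw [Finset.prod_congr rfl (fun i _ => by push_cast; ring :
        ∀ i ∈ Finset.range (n+1), x + ((i+1:ℕ):ℂ) = (x+1) + i)]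
      push_cast
      ring
    have hPQ : x * (∏ j ∈ Finset.range (n+1), ((x+1) + j))
        = (∏ j ∈ Finset.range (n+1), (x + j)) * (x + ((n+1:ℕ):ℂ)) := by
      rw [← hrw2, hrw]
    rw [hrw]
    have hxn : x + ((n+1:ℕ):ℂ) ≠ 0 := hx (n+1) le_rfl
    rw [Nat.factorial_succ]
    push_cast at hPQ hxn ⊢
    field_simp
    linear_combination (n.factorial : ℂ) * hPQ


/-- inner radial integral -/
lemma inner_int (k : ℕ) (c : ℝ) :
    ∫ r in Set.Ioo (0:ℝ) (Real.sqrt c), ((r:ℂ))^(2*k+1)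
      = ((max c 0 : ℝ) : ℂ)^(k+1) / (2*k+2) := by
  rw [← integral_Ioc_eq_integral_Ioo,
    ← intervalIntegral.integral_of_le (Real.sqrt_nonneg c)]
  have : ∀ x : ℝ, ((x:ℂ))^(2*k+1) = (((x^(2*k+1) : ℝ)):ℂ) := by intro x; push_cast; ring
  simp_rw [this]
  rw [intervalIntegral.integral_ofReal, integral_pow]
  rcases le_or_gt c 0 with hc | hc
  · rw [Real.sqrt_eq_zero'.mpr hc, max_eq_right hc]
    simp
  · have h1 : Real.sqrt c ^ (2*k+1+1) = c ^ (k+1) := by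
      rw [show 2*k+1+1 = 2*(k+1) by ring, pow_mul, Real.sq_sqrt hc.le]
    rw [h1, max_eq_left hc.le]
    push_cast
    ring

lemma two_j_ne (j : ℕ) : (2*(j:ℂ) - 1) ≠ 0 := by
  intro h
  have h2 : ((2*j : ℕ) : ℂ) = ((1 : ℕ) : ℂ) := by push_cast; linear_combination h
  have := Nat.cast_injective (R := ℂ) h2
  omega

/-- exp integral over the half period -/
lemma exp_int (j : ℕ) :
    ∫ φ in (-(π/2))..(π/2), Complex.exp ((2*(j:ℂ)-1) * Complex.I * φ)
      = (-2) * (-1:ℂ)^j / (2*(j:ℂ)-1) := by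
  have hc : (2*(j:ℂ)-1) * Complex.I ≠ 0 := mul_ne_zero (two_j_ne j) Complex.I_ne_zero
  rw [integral_exp_mul_complex hc]
  have e1 : (2*(j:ℂ)-1) * Complex.I * (π/2 : ℝ) = (j:ℂ)*(π*Complex.I) + (-(π/2):ℝ)*Complex.I := by
    push_cast; ring
  have e2 : (2*(j:ℂ)-1) * Complex.I * ((-(π/2)) : ℝ) = -((j:ℂ)*(π*Complex.I)) + ((π/2):ℝ)*Complex.I := by
    push_cast; ring
  rw [e1, e2, Complex.exp_add, Complex.exp_add, Complex.exp_nat_mul, Complex.exp_pi_mul_I]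
  rw [Complex.exp_neg, Complex.exp_nat_mul, Complex.exp_pi_mul_I]
  rw [Complex.exp_mul_I, Complex.exp_mul_I]
  have hπ2 : ((π:ℂ)/2) = ((π/2 : ℝ):ℂ) := by push_cast; ring
  push_cast
  rw [Complex.cos_neg, Complex.sin_neg, hπ2, ← Complex.ofReal_cos, ← Complex.ofReal_sin,
    Real.cos_pi_div_two, Real.sin_pi_div_two]
  have hinv : ((-1:ℂ)^j)⁻¹ = (-1)^j := inv_eq_of_mul_eq_one_left (by rw [← mul_pow]; norm_num)
  rw [hinv]
  rw [div_eq_div_iff (mul_ne_zero (two_j_ne j) Complex.I_ne_zero) (two_j_ne j)]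
  push_cast
  ring

lemma cos_pow_expand (k : ℕ) (φ : ℝ) (hφ : 0 ≤ Real.cos φ) :
    ((max (2*Real.cos φ) 0 : ℝ) : ℂ)^(k+1) * Complex.exp ((k:ℂ)*φ*Complex.I)
      = ∑ j ∈ Finset.range (k+2), (((k+1).choose j : ℕ) : ℂ)
          * Complex.exp ((2*(j:ℂ)-1) * Complex.I * φ) := by
  have hmax : max (2*Real.cos φ) 0 = 2*Real.cos φ := max_eq_left (by linarith)
  have h2cos : ((2*Real.cos φ : ℝ):ℂ)
      = Complex.exp ((φ:ℂ)*Complex.I) + Complex.exp (-(φ:ℂ)*Complex.I) := by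
    push_cast
    exact Complex.two_cos _
  have hfac : Complex.exp ((φ:ℂ)*Complex.I) + Complex.exp (-(φ:ℂ)*Complex.I)
      = Complex.exp (-(φ:ℂ)*Complex.I) * (Complex.exp (2*(φ:ℂ)*Complex.I) + 1) := by
    rw [mul_add, ← Complex.exp_add, mul_one]
    ring_nf
  rw [hmax, h2cos, hfac, mul_pow, add_pow, Finset.mul_sum, Finset.sum_mul]
  refine Finset.sum_congr rfl fun j hj => ?_
  rw [one_pow, mul_one, ← Complex.exp_nat_mul, ← Complex.exp_nat_mul]
  have : Complex.exp ((k+1:ℕ) * (-(φ:ℂ)*Complex.I)) * (Complex.exp ((j:ℕ) * (2*(φ:ℂ)*Complex.I)) * (((k+1).choose j : ℕ) : ℂ)) * Complex.exp ((k:ℂ)*φ*Complex.I)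
      = (((k+1).choose j : ℕ) : ℂ) * (Complex.exp ((k+1:ℕ) * (-(φ:ℂ)*Complex.I) + (j:ℕ) * (2*(φ:ℂ)*Complex.I)) * Complex.exp ((k:ℂ)*φ*Complex.I)) := by
    rw [Complex.exp_add]; ring
  rw [this, ← Complex.exp_add]
  congr 2
  push_cast
  ring

lemma prod_half (n : ℕ) : ∏ j ∈ Finset.range (n+1), ((-1/2 : ℂ) + j)
    = -(((2*n).factorial : ℂ)) / (2^(2*n+1) * (n.factorial : ℂ)) := by
  induction n with
  | zero => norm_num
  | succ n ih =>
    rw [Finset.prod_range_succ, ih]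
    have h1 : (2*(n+1)).factorial = (2*n+2) * ((2*n+1) * (2*n).factorial) := by
      rw [show 2*(n+1) = (2*n+1)+1 by ring, Nat.factorial_succ, Nat.factorial_succ]
    have h2 : (n+1).factorial = (n+1) * n.factorial := Nat.factorial_succ n
    rw [h1, h2]
    have hf1 : ((n.factorial : ℂ)) ≠ 0 := Nat.cast_ne_zero.2 (Nat.factorial_ne_zero n)
    have h2p : (2:ℂ)^(2*n+1) ≠ 0 := pow_ne_zero _ two_ne_zero
    have h2p2 : (2:ℂ)^(2*(n+1)+1) ≠ 0 := pow_ne_zero _ two_ne_zero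
    have hd2 : (2:ℂ)^(2*(n+1)+1) * (((n+1) * n.factorial : ℕ):ℂ) ≠ 0 :=
      mul_ne_zero h2p2 (Nat.cast_ne_zero.2 (by positivity))
    rw [div_mul_eq_mul_div, div_eq_div_iff (mul_ne_zero h2p hf1) hd2]
    push_cast
    rw [show 2*(n+1)+1 = (2*n+1) + 2 by ring, pow_add]
    ring

lemma S_val (n : ℕ) : ∑ j ∈ Finset.range (n+1),
      ((n.choose j : ℕ):ℂ) * ((-2) * (-1:ℂ)^j / (2*(j:ℂ)-1))
    = 2^(2*n+1) * ((n.factorial:ℂ))^2 / ((2*n).factorial : ℂ) := by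
  have hx : ∀ j ≤ n, (-1/2 : ℂ) + j ≠ 0 := by
    intro j _ h
    exact two_j_ne j (by linear_combination 2*h)
  have e1 : ∀ j ∈ Finset.range (n+1),
      ((n.choose j : ℕ):ℂ) * ((-2) * (-1:ℂ)^j / (2*(j:ℂ)-1))
      = -((-1:ℂ)^j * (n.choose j : ℕ) / ((-1/2 : ℂ) + j)) := by
    intro j hj
    have ha := two_j_ne j
    have hb := hx j (Nat.lt_succ_iff.1 (Finset.mem_range.1 hj))
    rw [mul_div_assoc', ← neg_div, div_eq_div_iff ha hb]
    ring
  rw [Finset.sum_congr rfl e1]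
  have hsum : ∑ j ∈ Finset.range (n+1), -((-1:ℂ)^j * (n.choose j : ℕ) / ((-1/2 : ℂ) + j))
      = -∑ j ∈ Finset.range (n+1), ((-1:ℂ)^j * (n.choose j : ℕ) / ((-1/2 : ℂ) + j)) := by
    rw [Finset.sum_neg_distrib]
  rw [hsum, sum_pf n _ hx, prod_half n]
  have hf2 : (((2*n).factorial : ℕ):ℂ) ≠ 0 := Nat.cast_ne_zero.2 (Nat.factorial_ne_zero _)
  have hf1 : ((n.factorial : ℕ):ℂ) ≠ 0 := Nat.cast_ne_zero.2 (Nat.factorial_ne_zero n)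
  have h2p : (2:ℂ)^(2*n+1) ≠ 0 := pow_ne_zero _ two_ne_zero
  rw [neg_div, div_neg, neg_neg, div_div_eq_mul_div]
  field_simp

/-- the function `h`. -/
def hfun (k : ℕ) (φ : ℝ) : ℂ :=
  ((max (2*Real.cos φ) 0 : ℝ) : ℂ)^(k+1) * Complex.exp ((k:ℂ)*φ*Complex.I)

lemma hfun_continuous (k : ℕ) : Continuous (hfun k) := by
  unfold hfun
  fun_prop

lemma half_int (k : ℕ) :
    ∫ φ in (-(π/2))..(π/2), hfun k φ
      = 2^(2*(k+1)+1) * (((k+1).factorial : ℕ):ℂ)^2 / (((2*(k+1)).factorial : ℕ):ℂ) := by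
  have hcong : ∀ φ ∈ Set.uIcc (-(π/2)) (π/2), hfun k φ
      = ∑ j ∈ Finset.range (k+2), (((k+1).choose j : ℕ) : ℂ)
          * Complex.exp ((2*(j:ℂ)-1) * Complex.I * φ) := by
    intro φ hφ
    rw [Set.uIcc_of_le (by linarith [pi_pos])] at hφ
    exact cos_pow_expand k φ (Real.cos_nonneg_of_mem_Icc hφ)
  rw [intervalIntegral.integral_congr hcong, intervalIntegral.integral_finset_sum]
  · have : ∀ j ∈ Finset.range (k+2),
        (∫ φ in (-(π/2))..(π/2), (((k+1).choose j : ℕ) : ℂ)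
          * Complex.exp ((2*(j:ℂ)-1) * Complex.I * φ))
        = (((k+1).choose j : ℕ) : ℂ) * ((-2) * (-1:ℂ)^j / (2*(j:ℂ)-1)) := by
      intro j _
      rw [intervalIntegral.integral_const_mul, exp_int]
    rw [Finset.sum_congr rfl this, S_val (k+1)]
  · intro j _
    exact (Continuous.intervalIntegrable (by fun_prop) _ _)

lemma hfun_periodic (k : ℕ) : Function.Periodic (hfun k) (2*π) := by
  intro φ
  unfold hfun
  have h1 : Real.cos (φ + 2*π) = Real.cos φ := Real.cos_add_two_pi φ
  have h2 : Complex.exp ((k:ℂ)*((φ + 2*π : ℝ):ℂ)*Complex.I) = Complex.exp ((k:ℂ)*(φ:ℂ)*Complex.I) := by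
    push_cast
    rw [show (k:ℂ)*((φ:ℂ)+2*π)*Complex.I = (k:ℂ)*φ*Complex.I + k*(2*π*Complex.I) by ring,
      Complex.exp_add, Complex.exp_nat_mul_two_pi_mul_I, mul_one]
  rw [h1, h2]

lemma hfun_zero_of_cos_nonpos (k : ℕ) (φ : ℝ) (h : Real.cos φ ≤ 0) : hfun k φ = 0 := by
  unfold hfun
  rw [max_eq_right (by linarith)]
  simp

lemma side_right (k : ℕ) : ∫ φ in (π/2)..π, hfun k φ = 0 := by
  have : ∀ φ ∈ Set.uIcc (π/2) π, hfun k φ = (0:ℂ) := by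
    intro φ hφ
    rw [Set.uIcc_of_le (by linarith [pi_pos])] at hφ
    exact hfun_zero_of_cos_nonpos k φ
      (Real.cos_nonpos_of_pi_div_two_le_of_le hφ.1 (by linarith [hφ.2, pi_pos]))
  rw [intervalIntegral.integral_congr this]
  simp

lemma side_left (k : ℕ) : ∫ φ in (-π)..(-(π/2)), hfun k φ = 0 := by
  have : ∀ φ ∈ Set.uIcc (-π) (-(π/2)), hfun k φ = (0:ℂ) := by
    intro φ hφ
    rw [Set.uIcc_of_le (by linarith [pi_pos])] at hφ
    have : Real.cos (-φ) ≤ 0 :=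
      Real.cos_nonpos_of_pi_div_two_le_of_le (by linarith [hφ.2]) (by linarith [hφ.1, pi_pos])
    rw [Real.cos_neg] at this
    exact hfun_zero_of_cos_nonpos k φ this
  rw [intervalIntegral.integral_congr this]
  simp

lemma mid_int (k : ℕ) : ∫ φ in (-π)..π, hfun k φ
    = 2^(2*(k+1)+1) * (((k+1).factorial : ℕ):ℂ)^2 / (((2*(k+1)).factorial : ℕ):ℂ) := by
  have hint : ∀ a b : ℝ, IntervalIntegrable (hfun k) MeasureTheory.volume a b :=
    fun a b => (hfun_continuous k).intervalIntegrable a b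
  have h1 : (∫ φ in (-π)..(-(π/2)), hfun k φ) + ∫ φ in (-(π/2))..π, hfun k φ
      = ∫ φ in (-π)..π, hfun k φ := intervalIntegral.integral_add_adjacent_intervals (hint _ _) (hint _ _)
  have h2 : (∫ φ in (-(π/2))..(π/2), hfun k φ) + ∫ φ in (π/2)..π, hfun k φ
      = ∫ φ in (-(π/2))..π, hfun k φ := intervalIntegral.integral_add_adjacent_intervals (hint _ _) (hint _ _)
  rw [← h1, ← h2, side_left, side_right, half_int]
  ring

lemma double_int (k : ℕ) : ∫ θ in (-π)..π, hfun k (2*θ)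
    = 2^(2*(k+1)+1) * (((k+1).factorial : ℕ):ℂ)^2 / (((2*(k+1)).factorial : ℕ):ℂ) := by
  have hint : ∀ a b : ℝ, IntervalIntegrable (hfun k) MeasureTheory.volume a b :=
    fun a b => (hfun_continuous k).intervalIntegrable a b
  rw [intervalIntegral.integral_comp_mul_left (hfun k) two_ne_zero]
  have h1 : ∫ φ in (2*(-π))..(0:ℝ), hfun k φ = ∫ φ in (-π)..π, hfun k φ := by
    have := (hfun_periodic k).intervalIntegral_add_eq (2*(-π)) (-π)
    simpa [show 2*(-π) + 2*π = 0 by ring, show -π + 2*π = π by ring] using this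
  have h2 : ∫ φ in (0:ℝ)..(2*π), hfun k φ = ∫ φ in (-π)..π, hfun k φ := by
    have := (hfun_periodic k).intervalIntegral_add_eq 0 (-π)
    simpa [show -π + 2*π = π by ring] using this
  have h3 : ∫ φ in (2*(-π))..(2*π), hfun k φ
      = (∫ φ in (2*(-π))..(0:ℝ), hfun k φ) + ∫ φ in (0:ℝ)..(2*π), hfun k φ :=
    (intervalIntegral.integral_add_adjacent_intervals (hint _ _) (hint _ _)).symm
  rw [h3, h1, h2, mid_int]
  norm_num
  rw [show 2*(k+1)+1 = 2*k+3 by ring, pow_succ]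
  ring

lemma polar_symm_eq (p : ℝ × ℝ) :
    Complex.polarCoord.symm p = (p.1 : ℂ) * Complex.exp ((p.2:ℝ) * Complex.I) := by
  rw [Complex.polarCoord_symm_apply, Complex.exp_mul_I, Complex.ofReal_cos, Complex.ofReal_sin]

lemma polar_symm_sq (p : ℝ × ℝ) :
    (Complex.polarCoord.symm p)^2 = ((p.1^2 : ℝ) : ℂ) * Complex.exp (((2*p.2 : ℝ):ℂ) * Complex.I) := by
  rw [polar_symm_eq, mul_pow, sq (Complex.exp _), ← Complex.exp_add]
  push_cast
  ring_nf

lemma mem_lemniscate_iff (p : ℝ × ℝ) (hr : 0 < p.1) :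
    Complex.polarCoord.symm p ∈ bernoulliLemniscate ↔ p.1^2 < 2*Real.cos (2*p.2) := by
  have hnormSq : Complex.normSq ((Complex.polarCoord.symm p)^2 - 1)
      = p.1^4 - 2*p.1^2*Real.cos (2*p.2) + 1 := by
    rw [polar_symm_sq, Complex.normSq_apply]
    simp only [Complex.sub_re, Complex.sub_im, Complex.mul_re, Complex.mul_im,
      Complex.ofReal_re, Complex.ofReal_im, Complex.exp_ofReal_mul_I_re,
      Complex.exp_ofReal_mul_I_im, Complex.one_re, Complex.one_im]
    linear_combination p.1^4 * Real.sin_sq_add_cos_sq (2*p.2)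
  have habs : ‖(Complex.polarCoord.symm p)^2 - 1‖ < 1
      ↔ Complex.normSq ((Complex.polarCoord.symm p)^2 - 1) < 1 := by
    rw [← Complex.sq_norm]
    constructor <;> intro h <;>
      nlinarith [norm_nonneg ((Complex.polarCoord.symm p)^2 - 1)]
  constructor
  · intro h
    have h2 := habs.1 h
    rw [hnormSq] at h2
    nlinarith [pow_pos hr 2]
  · intro h
    refine habs.2 ?_
    rw [hnormSq]
    nlinarith [pow_pos hr 2]

lemma polar_value (k : ℕ) (p : ℝ × ℝ) :
    p.1 • (Complex.polarCoord.symm p)^(2*k)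
      = (p.1:ℂ)^(2*k+1) * Complex.exp ((k:ℂ)*((2*p.2 : ℝ):ℂ)*Complex.I) := by
  rw [polar_symm_eq, mul_pow, ← Complex.exp_nat_mul, Complex.real_smul]
  have : Complex.exp ((2*k : ℕ) * ((p.2:ℝ) * Complex.I))
      = Complex.exp ((k:ℂ)*((2*p.2 : ℝ):ℂ)*Complex.I) := by
    congr 1
    push_cast
    ring
  rw [this]
  push_cast
  ring

def Tset : Set (ℝ × ℝ) := {p | 0 < p.1 ∧ p.1^2 < 2*Real.cos (2*p.2)}

def gfun (k : ℕ) (p : ℝ × ℝ) : ℂ :=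
  (p.1:ℂ)^(2*k+1) * Complex.exp ((k:ℂ)*((2*p.2 : ℝ):ℂ)*Complex.I)

lemma Tset_open : IsOpen Tset := by
  have h1 : IsOpen {p : ℝ × ℝ | 0 < p.1} := isOpen_lt continuous_const continuous_fst
  have h2 : IsOpen {p : ℝ × ℝ | p.1^2 < 2*Real.cos (2*p.2)} :=
    isOpen_lt (by fun_prop) (by fun_prop)
  have : Tset = {p : ℝ × ℝ | 0 < p.1} ∩ {p : ℝ × ℝ | p.1^2 < 2*Real.cos (2*p.2)} := rfl
  rw [this]
  exact h1.inter h2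

lemma gfun_continuous (k : ℕ) : Continuous (gfun k) := by
  unfold gfun
  fun_prop

def Eset : Set (ℝ × ℝ) := (polarCoord.target) ∩ Tset

lemma Eset_meas : MeasurableSet Eset :=
  (polarCoord.open_target.inter Tset_open).measurableSet

lemma Eset_sub : Eset ⊆ (Set.Icc (0:ℝ) 2) ×ˢ (Set.Icc (-π) π) := by
  rintro ⟨r, θ⟩ ⟨htar, h1, h2⟩
  rw [polarCoord_target] at htar
  obtain ⟨hr, hθ⟩ := htar
  constructor
  · constructor
    · exact le_of_lt h1
    · nlinarith [Real.neg_one_le_cos (2*θ), Real.cos_le_one (2*θ)]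
  · exact ⟨le_of_lt hθ.1, le_of_lt hθ.2⟩

lemma ind_integrable (k : ℕ) : MeasureTheory.Integrable (Eset.indicator (gfun k)) := by
  rw [MeasureTheory.integrable_indicator_iff Eset_meas]
  have hcpt : IsCompact ((Set.Icc (0:ℝ) 2) ×ˢ (Set.Icc (-π) π)) :=
    IsCompact.prod isCompact_Icc isCompact_Icc
  exact ((gfun_continuous k).continuousOn.integrableOn_compact hcpt).mono_set Eset_sub

lemma lem_open : IsOpen bernoulliLemniscate :=
  isOpen_lt (continuous_norm.comp ((continuous_pow 2).sub continuous_const))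
    continuous_const

lemma step_polar (k : ℕ) :
    (∫ z in bernoulliLemniscate, z^(2*k)) = ∫ p, Eset.indicator (gfun k) p := by
  rw [← MeasureTheory.integral_indicator lem_open.measurableSet,
    ← Complex.integral_comp_polarCoord_symm]
  have step3 : Set.EqOn
      (fun p : ℝ × ℝ => p.1 • (bernoulliLemniscate.indicator (fun z => z^(2*k)) (Complex.polarCoord.symm p)))
      (Tset.indicator (gfun k)) polarCoord.target := by
    intro p hp
    rw [polarCoord_target] at hp
    have hr : 0 < p.1 := hp.1
    by_cases hmem : Complex.polarCoord.symm p ∈ bernoulliLemniscate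
    · have hT : p ∈ Tset := ⟨hr, (mem_lemniscate_iff p hr).1 hmem⟩
      simp only [Set.indicator_of_mem hmem, Set.indicator_of_mem hT]
      exact polar_value k p
    · have hT : p ∉ Tset := by
        intro h
        exact hmem ((mem_lemniscate_iff p hr).2 h.2)
      simp only [Set.indicator_of_notMem hmem, Set.indicator_of_notMem hT, smul_zero]
  rw [MeasureTheory.setIntegral_congr_fun polarCoord.open_target.measurableSet step3,
    MeasureTheory.setIntegral_indicator Tset_open.measurableSet]
  have hE : polarCoord.target ∩ Tset = Eset := rfl
  rw [hE, ← MeasureTheory.integral_indicator Eset_meas]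

lemma inner_eq (k : ℕ) (θ : ℝ) :
    (∫ r, Eset.indicator (gfun k) (r, θ))
      = (Set.Ioo (-π) π).indicator (fun θ =>
          (((max (2*Real.cos (2*θ)) 0 : ℝ):ℂ))^(k+1) / (2*(k:ℂ)+2)
            * Complex.exp ((k:ℂ)*((2*θ : ℝ):ℂ)*Complex.I)) θ := by
  by_cases hθ : θ ∈ Set.Ioo (-π) π
  · rw [Set.indicator_of_mem hθ]
    have hsetmem : ∀ r : ℝ, (r, θ) ∈ Eset ↔ r ∈ Set.Ioo 0 (Real.sqrt (2*Real.cos (2*θ))) := by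
      intro r
      constructor
      · rintro ⟨htar, h1, h2⟩
        exact ⟨h1, (Real.lt_sqrt h1.le).2 h2⟩
      · rintro ⟨h1, h2⟩
        have h3 : r^2 < 2*Real.cos (2*θ) := (Real.lt_sqrt h1.le).1 h2
        refine ⟨?_, h1, h3⟩
        rw [polarCoord_target]
        exact ⟨h1, hθ⟩
    have heq : (fun r : ℝ => Eset.indicator (gfun k) (r, θ))
        = (Set.Ioo (0:ℝ) (Real.sqrt (2*Real.cos (2*θ)))).indicator
            (fun r : ℝ => (r:ℂ)^(2*k+1) * Complex.exp ((k:ℂ)*((2*θ : ℝ):ℂ)*Complex.I)) := by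
      funext r
      by_cases hr : r ∈ Set.Ioo (0:ℝ) (Real.sqrt (2*Real.cos (2*θ)))
      · rw [Set.indicator_of_mem hr, Set.indicator_of_mem ((hsetmem r).2 hr)]
        rfl
      · rw [Set.indicator_of_notMem hr,
          Set.indicator_of_notMem (fun h => hr ((hsetmem r).1 h))]
    rw [heq, MeasureTheory.integral_indicator measurableSet_Ioo,
      MeasureTheory.integral_mul_const, inner_int k]
  · rw [Set.indicator_of_notMem hθ]
    have hzero : ∀ r : ℝ, Eset.indicator (gfun k) (r, θ) = 0 := by
      intro r
      refine Set.indicator_of_notMem ?_ _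
      rintro ⟨htar, -⟩
      rw [polarCoord_target] at htar
      exact hθ htar.2
    simp [hzero]

lemma main_int (k : ℕ) : (∫ z in bernoulliLemniscate, z^(2*k))
    = 2^(2*k+1) * ((k.factorial : ℕ):ℂ)^2 / (((2*k+1).factorial : ℕ):ℂ) := by
  rw [step_polar k]
  have hInt : MeasureTheory.Integrable (Eset.indicator (gfun k))
      ((volume : Measure ℝ).prod (volume : Measure ℝ)) := by
    rw [← MeasureTheory.Measure.volume_eq_prod]
    exact ind_integrable k
  have hfub : (∫ p, Eset.indicator (gfun k) p)
      = ∫ θ, ∫ r, Eset.indicator (gfun k) (r, θ) := by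
    rw [MeasureTheory.Measure.volume_eq_prod]
    exact MeasureTheory.integral_prod_symm _ hInt
  rw [hfub]
  have houter : (∫ θ, ∫ r, Eset.indicator (gfun k) (r, θ))
      = ∫ θ in Set.Ioo (-π) π, (((max (2*Real.cos (2*θ)) 0 : ℝ):ℂ))^(k+1) / (2*(k:ℂ)+2)
          * Complex.exp ((k:ℂ)*((2*θ : ℝ):ℂ)*Complex.I) := by
    simp_rw [inner_eq k]
    exact MeasureTheory.integral_indicator measurableSet_Ioo
  rw [houter, ← MeasureTheory.integral_Ioc_eq_integral_Ioo,
    ← intervalIntegral.integral_of_le (by linarith [pi_pos] : -π ≤ π)]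
  have hfn : ∀ θ : ℝ, (((max (2*Real.cos (2*θ)) 0 : ℝ):ℂ))^(k+1) / (2*(k:ℂ)+2)
      * Complex.exp ((k:ℂ)*((2*θ : ℝ):ℂ)*Complex.I) = hfun k (2*θ) / (2*(k:ℂ)+2) := by
    intro θ
    unfold hfun
    ring
  simp_rw [hfn]
  rw [intervalIntegral.integral_div, double_int k]
  -- final arithmetic
  have e1 : ((k+1).factorial : ℕ) = (k+1) * k.factorial := Nat.factorial_succ k
  have e2 : ((2*(k+1)).factorial : ℕ) = (2*k+2) * (2*k+1).factorial := by
    rw [show 2*(k+1) = (2*k+1)+1 by ring, Nat.factorial_succ]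
  rw [e1, e2]
  have h1 : ((k.factorial : ℕ):ℂ) ≠ 0 := Nat.cast_ne_zero.2 (Nat.factorial_ne_zero k)
  have h2 : (((2*k+1).factorial : ℕ):ℂ) ≠ 0 := Nat.cast_ne_zero.2 (Nat.factorial_ne_zero _)
  have h3 : (2*(k:ℂ)+2) ≠ 0 := by
    intro h
    have : ((2*k+2 : ℕ):ℂ) = ((0:ℕ):ℂ) := by push_cast; linear_combination h
    have := Nat.cast_injective (R := ℂ) this
    omega
  push_cast
  rw [show 2*(k+1)+1 = (2*k+1) + 2 by ring, pow_add]
  field_simp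

/-- Even harmonic moments of the Bernoulli lemniscate:
`M_{2k}(Ω) = 2^{2k+1} (k!)² / (π (2k+1)!)`. -/
theorem bernoulli_even_moments (k : ℕ) :
    (1 / (π : ℂ)) * ∫ z in bernoulliLemniscate, z ^ (2 * k) =
      ((2 : ℂ) ^ (2 * k + 1) * (Nat.factorial k : ℂ) ^ 2) /
        ((π : ℂ) * (Nat.factorial (2 * k + 1) : ℂ)) := by
  rw [main_int k]
  have hπ : (π:ℂ) ≠ 0 := Complex.ofReal_ne_zero.2 Real.pi_ne_zero
  have h2 : (((2*k+1).factorial : ℕ):ℂ) ≠ 0 := Nat.cast_ne_zero.2 (Nat.factorial_ne_zero _)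
  field_simp

end
end

section
/- The Cauchy transform of the Bernoulli lemniscate domain Ω = {z : |z²-1| < 1}, given for large |z| by the series C_Ω(z) = ∑_{k ≥ 0} (2^{2k+1}(k!)²/(π(2k+1)!)) z^{-2k-1}, equals (2/π) · arcsin(1/z) / √(1 - 1/z²) for real z > √2. -/
set_option autoImplicit false

open Real


open intervalIntegral MeasureTheory

lemma beta_step (a b : ℕ) :
    ∫ x in (0:ℝ)..1, x ^ a * (1 - x) ^ (b + 1)
      = (b + 1 : ℝ) / (a + 1) * ∫ x in (0:ℝ)..1, x ^ (a + 1) * (1 - x) ^ b := by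
  have key := intervalIntegral.integral_mul_deriv_eq_deriv_mul
    (u := fun x : ℝ => (1 - x) ^ (b + 1)) (v := fun x : ℝ => x ^ (a + 1) / (a + 1))
    (u' := fun x : ℝ => -((b + 1 : ℝ) * (1 - x) ^ b)) (v' := fun x : ℝ => x ^ a)
    (a := 0) (b := 1)
    (fun x _ => by
      have h1 : HasDerivAt (fun x : ℝ => 1 - x) (-1) x := by
        simpa using (hasDerivAt_id x).const_sub 1
      simpa [mul_comm, mul_assoc, mul_left_comm] using (h1.fun_pow (b + 1)))
    (fun x _ => by
      have := (hasDerivAt_pow (a + 1) x).div_const (a + 1 : ℝ)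
      simpa [Nat.add_sub_cancel, mul_comm, mul_div_assoc,
        mul_div_cancel_left₀, Nat.cast_add_one_ne_zero] using this)
    (by apply Continuous.intervalIntegrable; continuity)
    (by apply Continuous.intervalIntegrable; continuity)
  have comm : (∫ x in (0:ℝ)..1, x ^ a * (1 - x) ^ (b + 1))
      = ∫ x in (0:ℝ)..1, (1 - x) ^ (b + 1) * x ^ a :=
    intervalIntegral.integral_congr fun x _ => mul_comm _ _
  rw [comm, key]
  norm_num
  rw [← intervalIntegral.integral_const_mul]
  exact intervalIntegral.integral_congr fun x _ => by ring

lemma beta_nat (b a : ℕ) :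
    ∫ x in (0:ℝ)..1, x ^ a * (1 - x) ^ b
      = (a.factorial : ℝ) * b.factorial / (a + b + 1).factorial := by
  induction b generalizing a with
  | zero =>
      simp only [pow_zero, mul_one, integral_pow, one_pow, Nat.factorial_zero, Nat.cast_one,
        Nat.add_zero, Nat.factorial_succ]
      rw [zero_pow (by omega)]
      push_cast
      field_simp
      norm_num
  | succ b ih =>
      rw [beta_step, ih (a + 1)]
      have h1 : a + 1 + b + 1 = a + (b + 1) + 1 := by omega
      rw [h1, Nat.factorial_succ (a), Nat.factorial_succ b]
      push_cast
      have ha : (a : ℝ) + 1 ≠ 0 := by positivity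
      have hf : ((a + (b + 1) + 1).factorial : ℝ) ≠ 0 := by positivity
      field_simp


lemma four_pow_le (k : ℕ) : 4 ^ k ≤ (2 * k + 1) * Nat.centralBinom k := by
  induction k with
  | zero => simp [Nat.centralBinom]
  | succ k ih =>
      calc 4 ^ (k + 1) = 4 * 4 ^ k := by ring
        _ ≤ 4 * ((2 * k + 1) * Nat.centralBinom k) := Nat.mul_le_mul_left 4 ih
        _ = 2 * ((k + 1) * Nat.centralBinom (k + 1)) := by
            rw [Nat.succ_mul_centralBinom_succ]; ring
        _ = (2 * (k + 1)) * Nat.centralBinom (k + 1) := by ring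
        _ ≤ (2 * (k + 1) + 1) * Nat.centralBinom (k + 1) :=
            Nat.mul_le_mul_right _ (by omega)

lemma coeff_nat (k : ℕ) : 4 ^ k * (k.factorial * k.factorial) ≤ (2 * k + 1).factorial := by
  calc 4 ^ k * (k.factorial * k.factorial)
      ≤ (2 * k + 1) * Nat.centralBinom k * (k.factorial * k.factorial) :=
        Nat.mul_le_mul_right _ (four_pow_le k)
    _ = (2 * k + 1) * (Nat.centralBinom k * k.factorial * (2 * k - k).factorial) := by
        rw [show 2 * k - k = k from by omega]; ring
    _ = (2 * k + 1) * (2 * k).factorial := by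
        rw [Nat.centralBinom, Nat.choose_mul_factorial_mul_factorial (by omega)]
    _ = (2 * k + 1).factorial := (Nat.factorial_succ _).symm

lemma coeff_le_one (k : ℕ) :
    (4 : ℝ) ^ k * (k.factorial : ℝ) ^ 2 / ((2 * k + 1).factorial : ℝ) ≤ 1 := by
  rw [div_le_one (by positivity)]
  calc (4 : ℝ) ^ k * (k.factorial : ℝ) ^ 2
      = ((4 ^ k * (k.factorial * k.factorial) : ℕ) : ℝ) := by push_cast; ring
    _ ≤ ((2 * k + 1).factorial : ℝ) := Nat.cast_le.mpr (coeff_nat k)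

lemma integral_term (x : ℝ) (k : ℕ) :
    ∫ s in (0:ℝ)..1, x * (4 * x ^ 2 * (s * (1 - s))) ^ k
      = (4 : ℝ) ^ k * (k.factorial : ℝ) ^ 2 / ((2 * k + 1).factorial : ℝ) * x ^ (2 * k + 1) := by
  have h : ∀ s : ℝ, x * (4 * x ^ 2 * (s * (1 - s))) ^ k
      = x * (4 * x ^ 2) ^ k * (s ^ k * (1 - s) ^ k) := fun s => by
    rw [mul_pow (4 * x ^ 2), mul_pow s]; ring
  simp_rw [h]
  rw [intervalIntegral.integral_const_mul, beta_nat k k]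
  have hkk : k + k + 1 = 2 * k + 1 := by omega
  rw [hkk, pow_add, pow_mul]
  rw [mul_pow]
  ring


lemma integral_geom {x : ℝ} (hx0 : 0 < x) (hx1 : x < 1) :
    ∫ s in (0:ℝ)..1, x / (1 - 4 * x ^ 2 * (s * (1 - s)))
      = arcsin x / Real.sqrt (1 - x ^ 2) := by
  set c : ℝ := Real.sqrt (1 - x ^ 2) with hc_def
  have hu : 0 < 1 - x ^ 2 := by nlinarith
  have hc : 0 < c := Real.sqrt_pos.mpr hu
  have hc2 : c ^ 2 = 1 - x ^ 2 := Real.sq_sqrt hu.le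
  have hden : ∀ s : ℝ, s ∈ Set.uIcc (0:ℝ) 1 → 0 < 1 - 4 * x ^ 2 * (s * (1 - s)) := by
    intro s hs
    rw [Set.uIcc_of_le zero_le_one] at hs
    nlinarith [sq_nonneg (2 * s - 1), hs.1, hs.2, sq_nonneg x]
  have hderiv : ∀ s ∈ Set.uIcc (0:ℝ) 1,
      HasDerivAt (fun s : ℝ => 1 / (2 * c) * arctan (x * (2 * s - 1) / c))
        (x / (1 - 4 * x ^ 2 * (s * (1 - s)))) s := by
    intro s hs
    have hi : HasDerivAt (fun s : ℝ => x * (2 * s - 1) / c) (2 * x / c) s := by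
      have h1 : HasDerivAt (fun s : ℝ => 2 * s - 1) 2 s := by
        simpa using ((hasDerivAt_id s).const_mul (2:ℝ)).sub_const 1
      have := (h1.const_mul x).div_const c
      simpa [mul_comm, mul_left_comm] using this
    have harc := (Real.hasDerivAt_arctan (x * (2 * s - 1) / c)).comp s hi
    have := harc.const_mul (1 / (2 * c))
    refine this.congr_deriv ?_
    have h2 := hden s hs
    have key : 1 + (x * (2 * s - 1) / c) ^ 2
        = (1 - 4 * x ^ 2 * (s * (1 - s))) / c ^ 2 := by
      rw [div_pow, hc2]
      field_simp
      ring
    rw [key, one_div_div]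
    field_simp
  rw [intervalIntegral.integral_eq_sub_of_hasDerivAt hderiv (by
    apply ContinuousOn.intervalIntegrable
    exact continuousOn_const.div (by fun_prop) (fun s hs => (hden s hs).ne'))]
  have harcsin : arcsin x = arctan (x / c) :=
    Real.arcsin_eq_arctan ⟨by linarith, hx1⟩
  rw [harcsin]
  have e1 : (1:ℝ) / (2 * c) * arctan (x * (2 * 1 - 1) / c)
      - 1 / (2 * c) * arctan (x * (2 * 0 - 1) / c) = arctan (x / c) / c := by
    rw [show x * (2 * (1:ℝ) - 1) / c = x / c by ring,
      show x * (2 * (0:ℝ) - 1) / c = -(x / c) by ring, Real.arctan_neg]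
    field_simp
    ring
  exact e1


lemma key_sum {x : ℝ} (hx0 : 0 < x) (hx1 : x < 1) :
    HasSum (fun k : ℕ =>
        (4 : ℝ) ^ k * (k.factorial : ℝ) ^ 2 / ((2 * k + 1).factorial : ℝ) * x ^ (2 * k + 1))
      (arcsin x / Real.sqrt (1 - x ^ 2)) := by
  set F : ℕ → ℝ → ℝ := fun k s => x * (4 * x ^ 2 * (s * (1 - s))) ^ k with hF
  have hcont : ∀ k, Continuous (F k) := fun k => by fun_prop
  have hInt : ∀ k, IntegrableOn (F k) (Set.Ioc (0:ℝ) 1) := fun k => (hcont k).integrableOn_Ioc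
  have hnonneg : ∀ k, ∀ s ∈ Set.Ioc (0:ℝ) 1, 0 ≤ F k s := by
    intro k s hs
    have h1 : 0 ≤ s * (1 - s) := mul_nonneg hs.1.le (by linarith [hs.2])
    have : (0:ℝ) ≤ 4 * x ^ 2 * (s * (1 - s)) := by positivity
    positivity
  have hval : ∀ k, ∫ s in Set.Ioc (0:ℝ) 1, F k s
      = (4 : ℝ) ^ k * (k.factorial : ℝ) ^ 2 / ((2 * k + 1).factorial : ℝ) * x ^ (2 * k + 1) := by
    intro k
    rw [← intervalIntegral.integral_of_le zero_le_one]
    exact integral_term x k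
  have hnormval : ∀ k, ∫ s in Set.Ioc (0:ℝ) 1, ‖F k s‖
      = (4 : ℝ) ^ k * (k.factorial : ℝ) ^ 2 / ((2 * k + 1).factorial : ℝ) * x ^ (2 * k + 1) := by
    intro k
    rw [setIntegral_congr_fun measurableSet_Ioc
      (fun s hs => Real.norm_of_nonneg (hnonneg k s hs)), hval k]
  have hsum : Summable fun k => ∫ s in Set.Ioc (0:ℝ) 1, ‖F k s‖ := by
    rw [funext hnormval]
    apply Summable.of_nonneg_of_le
      (fun k => by positivity)
      (fun k => ?_)
      (((summable_geometric_of_lt_one (by positivity) (by nlinarith : x ^ 2 < 1))).mul_left x)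
    calc (4 : ℝ) ^ k * (k.factorial : ℝ) ^ 2 / ((2 * k + 1).factorial : ℝ) * x ^ (2 * k + 1)
        ≤ 1 * x ^ (2 * k + 1) := by
          apply mul_le_mul_of_nonneg_right (coeff_le_one k) (by positivity)
      _ = x * (x ^ 2) ^ k := by rw [one_mul, pow_add, pow_mul]; ring
  have main := MeasureTheory.hasSum_integral_of_summable_integral_norm hInt hsum
  have htsum : ∀ s ∈ Set.Ioc (0:ℝ) 1, ∑' k, F k s = x / (1 - 4 * x ^ 2 * (s * (1 - s))) := by
    intro s hs
    have h1 : 0 ≤ s * (1 - s) := mul_nonneg hs.1.le (by linarith [hs.2])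
    have h0 : 0 ≤ 4 * x ^ 2 * (s * (1 - s)) := by positivity
    have hlt : 4 * x ^ 2 * (s * (1 - s)) < 1 := by
      nlinarith [sq_nonneg (2 * s - 1), sq_nonneg x, hs.1.le, hs.2]
    simp only [hF]
    rw [tsum_mul_left, tsum_geometric_of_lt_one h0 hlt, div_eq_mul_inv]
  have hfinal : ∫ s in Set.Ioc (0:ℝ) 1, ∑' k, F k s = arcsin x / Real.sqrt (1 - x ^ 2) := by
    rw [setIntegral_congr_fun measurableSet_Ioc htsum,
      ← intervalIntegral.integral_of_le zero_le_one]
    exact integral_geom hx0 hx1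
  rw [hfinal] at main
  exact funext hval ▸ main


/-- The Cauchy transform of the Bernoulli lemniscate, given by the series
`∑_{k≥0} (2^{2k+1}(k!)²/(π(2k+1)!)) z^{-(2k+1)}`, equals
`(2/π) arcsin(1/z) / √(1 - 1/z²)` for real `z > √2`. -/
theorem bernoulli_cauchy_transform (z : ℝ) (hz : Real.sqrt 2 < z) :
    HasSum
      (fun k : ℕ =>
        (2 ^ (2 * k + 1) * (Nat.factorial k : ℝ) ^ 2 / (π * (Nat.factorial (2 * k + 1) : ℝ))) /
          z ^ (2 * k + 1))
      ((2 / π) * Real.arcsin (1 / z) / Real.sqrt (1 - 1 / z ^ 2)) := by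
  have hs2 : (1:ℝ) < Real.sqrt 2 := by
    nlinarith [Real.sq_sqrt (by norm_num : (0:ℝ) ≤ 2), Real.sqrt_nonneg 2]
  have hz1 : 1 < z := lt_trans hs2 hz
  have hz0 : 0 < z := lt_trans one_pos hz1
  have hx0 : 0 < 1 / z := by positivity
  have hx1 : 1 / z < 1 := (div_lt_one hz0).mpr hz1
  have h := (key_sum hx0 hx1).mul_left (2 / π)
  have hfun : (fun k : ℕ =>
      (2 ^ (2 * k + 1) * (Nat.factorial k : ℝ) ^ 2 / (π * (Nat.factorial (2 * k + 1) : ℝ))) /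
        z ^ (2 * k + 1))
      = fun k : ℕ => 2 / π *
        ((4 : ℝ) ^ k * (k.factorial : ℝ) ^ 2 / (((2 * k + 1).factorial : ℝ))
          * (1 / z) ^ (2 * k + 1)) := by
    funext k
    have hπ : (π : ℝ) ≠ 0 := Real.pi_ne_zero
    have hfz : ((2 * k + 1).factorial : ℝ) ≠ 0 := by positivity
    have hzz : z ^ (2 * k + 1) ≠ 0 := by positivity
    rw [div_pow, one_pow]
    rw [show (2:ℝ) ^ (2 * k + 1) = 2 * 4 ^ k by rw [pow_succ, pow_mul]; norm_num; ring]
    field_simp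
  rw [hfun]
  have hS : (2 / π) * Real.arcsin (1 / z) / Real.sqrt (1 - 1 / z ^ 2)
      = 2 / π * (arcsin (1 / z) / Real.sqrt (1 - (1 / z) ^ 2)) := by
    rw [div_pow, one_pow, mul_div_assoc]
  rw [hS]
  exact h
end

section
/- Let φ(z,w) = ∑_{i,j=0}^d φ_{ij} z^i \bar{w}^j be a Hermitian polynomial (φ_{ji} = conj(φ_{ij})) with principal divisor a(z) = gcd of the coefficient polynomials φ_d(z), ..., φ_0(z) (where φ(z,w) = ∑_j φ_j(z) \bar{w}^j). Then φ(z,w) = a(z)·conj(a(w))·φ₀(z,w) where φ₀ is a primitive Hermitian polynomial (its coefficient polynomials in z have gcd 1). Conversely, if φ = a(z)conj(a(w))φ₀ with φ₀ primitive Hermitian, then a is, up to a unimodular constant, the principal divisor of φ. -/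
set_option autoImplicit false

open Polynomial

/-- A Hermitian polynomial `φ(z,w) = ∑ φ_{ij} z^i conj(w)^j`, encoded as an element of
`ℂ[z][w̄]` (outer variable `w̄`, coefficients `φ_j(z) ∈ ℂ[z]`), satisfies
`φ_{ji} = conj(φ_{ij})`. -/
def IsHermitian (P : Polynomial (Polynomial ℂ)) : Prop :=
  ∀ i j : ℕ, (P.coeff j).coeff i = (starRingEnd ℂ) ((P.coeff i).coeff j)

/-- `φ` is primitive if the gcd over `ℂ[z]` of its coefficient polynomials is `1`. -/
def IsPrimitivePoly (P : Polynomial (Polynomial ℂ)) : Prop :=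
  ∀ b : Polynomial ℂ, (∀ j : ℕ, b ∣ P.coeff j) → IsUnit b

/-- The polynomial `a(z)·conj(a(w))` viewed in `ℂ[z][w̄]`: `a` embedded as a constant in `w̄`,
times the conjugated polynomial in `w̄`. -/
noncomputable def sepProduct (a : Polynomial ℂ) : Polynomial (Polynomial ℂ) :=
  Polynomial.C a * (a.map (starRingEnd ℂ)).map Polynomial.C

noncomputable def swapHom : Polynomial (Polynomial ℂ) →+* Polynomial (Polynomial ℂ) :=
  eval₂RingHom (mapRingHom (C : ℂ →+* Polynomial ℂ)) (C X)

noncomputable def sigmaHom : Polynomial (Polynomial ℂ) →+* Polynomial (Polynomial ℂ) :=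
  (mapRingHom (mapRingHom (starRingEnd ℂ))).comp swapHom

lemma swap_coeff (P : Polynomial (Polynomial ℂ)) (i j : ℕ) :
    ((swapHom P).coeff j).coeff i = (P.coeff i).coeff j := by
  induction P using Polynomial.induction_on' with
  | add p q hp hq => simp [map_add, hp, hq]
  | monomial n q =>
      simp only [swapHom, coe_eval₂RingHom, eval₂_monomial, coe_mapRingHom, ← C_pow,
        coeff_mul_C, coeff_map, coeff_monomial]
      by_cases h : i = n <;> simp [h, coeff_C_mul, coeff_X_pow, eq_comm]

lemma sigma_coeff (P : Polynomial (Polynomial ℂ)) (i j : ℕ) :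
    ((sigmaHom P).coeff j).coeff i = (starRingEnd ℂ) ((P.coeff i).coeff j) := by
  simp [sigmaHom, coeff_map, swap_coeff]

lemma hermitian_iff (P : Polynomial (Polynomial ℂ)) : IsHermitian P ↔ sigmaHom P = P := by
  constructor
  · intro h
    ext j i
    rw [sigma_coeff, ← h]
  · intro h i j
    conv_lhs => rw [← h]
    rw [sigma_coeff]

lemma sigma_C (a : Polynomial ℂ) :
    sigmaHom (C a) = (a.map (starRingEnd ℂ)).map C := by
  ext j i
  rw [sigma_coeff]
  simp only [coeff_C, coeff_map]
  split_ifs with h <;> simp [h]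

lemma sigma_conjmap (a : Polynomial ℂ) :
    sigmaHom ((a.map (starRingEnd ℂ)).map C) = C a := by
  ext j i
  rw [sigma_coeff]
  simp only [coeff_C, coeff_map]
  split_ifs with h <;> simp [h, coeff_C]

lemma sigma_sep (a : Polynomial ℂ) : sigmaHom (sepProduct a) = sepProduct a := by
  rw [sepProduct, map_mul, sigma_C, sigma_conjmap, mul_comm]

lemma cancel_lemma (M : Polynomial (Polynomial ℂ))
    (hM : ∀ p : Polynomial ℂ, Prime p → ¬ (C p : Polynomial (Polynomial ℂ)) ∣ M) :
    ∀ b : Polynomial ℂ, ∀ Q : Polynomial (Polynomial ℂ), (C b) ∣ M * Q → (C b) ∣ Q := by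
  have hM0 : M ≠ 0 := by
    intro h
    exact hM X Polynomial.prime_X (h ▸ dvd_zero _)
  intro b
  induction b using UniqueFactorizationMonoid.induction_on_prime with
  | h₁ =>
      intro Q hQ
      rw [map_zero, zero_dvd_iff] at hQ ⊢
      rcases mul_eq_zero.mp hQ with h | h
      · exact absurd h hM0
      · exact h
  | h₂ x hx =>
      intro Q _
      exact (hx.map (C : Polynomial ℂ →+* Polynomial (Polynomial ℂ))).dvd
  | h₃ c p hc hp ih =>
      intro Q hQ
      have hpC : Prime (C p : Polynomial (Polynomial ℂ)) := Polynomial.prime_C_iff.mpr hp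
      have hpQ : (C p : Polynomial (Polynomial ℂ)) ∣ Q := by
        rcases hpC.2.2 _ _ (dvd_trans (map_dvd (C : Polynomial ℂ →+* Polynomial (Polynomial ℂ)) (dvd_mul_right p c)) hQ) with h | h
        · exact absurd h (hM p hp)
        · exact h
      obtain ⟨Q', rfl⟩ := hpQ
      have hcQ : (C c : Polynomial (Polynomial ℂ)) ∣ Q' := by
        apply ih
        have : (C p : Polynomial (Polynomial ℂ)) * C c ∣ C p * (M * Q') := by
          rw [← map_mul]
          have e : M * (C p * Q') = C p * (M * Q') := by ring
          exact e ▸ hQ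
        exact (mul_dvd_mul_iff_left (by simpa using hpC.1)).mp this
      rw [map_mul]
      exact mul_dvd_mul_left _ hcQ

lemma no_prime_dvd_conjmap {a : Polynomial ℂ} (ha : a.Monic) (p : Polynomial ℂ)
    (hp : Prime p) : ¬ (C p : Polynomial (Polynomial ℂ)) ∣ (a.map (starRingEnd ℂ)).map C := by
  intro h
  have := (C_dvd_iff_dvd_coeff _ _).mp h a.natDegree
  rw [coeff_map, coeff_map, ha.coeff_natDegree] at this
  simp only [map_one] at this
  exact hp.not_unit (isUnit_of_dvd_one this)

lemma conjmap_ne_zero {a : Polynomial ℂ} (ha : a.Monic) :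
    (a.map (starRingEnd ℂ)).map (C : ℂ →+* Polynomial ℂ) ≠ 0 := by
  intro h
  have : ((a.map (starRingEnd ℂ)).map (C : ℂ →+* Polynomial ℂ)).coeff a.natDegree = 1 := by
    rw [coeff_map, coeff_map, ha.coeff_natDegree]; simp
  rw [h] at this
  simp at this

/-- Principal factorization of a Hermitian polynomial: if `a` is the (monic) gcd of the
coefficient polynomials of `φ`, then `φ = a(z) conj(a(w)) φ₀` with `φ₀` a primitive
Hermitian polynomial; conversely, any such factorization with `φ₀` primitive Hermitian
identifies the monic `a` as the principal divisor (gcd of the coefficients). -/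
theorem principal_factorization :
    (∀ (P : Polynomial (Polynomial ℂ)) (a : Polynomial ℂ), IsHermitian P → P ≠ 0 →
      a.Monic → (∀ j : ℕ, a ∣ P.coeff j) →
      (∀ b : Polynomial ℂ, (∀ j : ℕ, b ∣ P.coeff j) → b ∣ a) →
      ∃ φ₀ : Polynomial (Polynomial ℂ), IsHermitian φ₀ ∧ IsPrimitivePoly φ₀ ∧
        P = sepProduct a * φ₀) ∧
    (∀ (P φ₀ : Polynomial (Polynomial ℂ)) (a : Polynomial ℂ), a.Monic →
      IsHermitian φ₀ → IsPrimitivePoly φ₀ → P = sepProduct a * φ₀ →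
      (∀ j : ℕ, a ∣ P.coeff j) ∧
      (∀ b : Polynomial ℂ, (∀ j : ℕ, b ∣ P.coeff j) → b ∣ a)) := by
  constructor
  · intro P a hH _hP0 ha hdvd hgcd
    set A : Polynomial (Polynomial ℂ) := (a.map (starRingEnd ℂ)).map C with hA
    have hCa : (C a : Polynomial (Polynomial ℂ)) ∣ P := (C_dvd_iff_dvd_coeff a P).mpr hdvd
    have hAd : A ∣ P := by
      have := map_dvd sigmaHom hCa
      rwa [sigma_C, (hermitian_iff P).mp hH] at this
    obtain ⟨Q, hQ⟩ := hAd
    have hCaQ : (C a : Polynomial (Polynomial ℂ)) ∣ Q :=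
      cancel_lemma A (fun p hp => no_prime_dvd_conjmap ha p hp) a Q (hQ ▸ hCa)
    obtain ⟨φ₀, hφ⟩ := hCaQ
    have hPeq : P = sepProduct a * φ₀ := by
      rw [hQ, hφ, sepProduct, ← hA]; ring
    have hsep0 : sepProduct a ≠ 0 := by
      rw [sepProduct]
      exact mul_ne_zero (by simpa using ha.ne_zero) (conjmap_ne_zero ha)
    refine ⟨φ₀, ?_, ?_, hPeq⟩
    · rw [hermitian_iff]
      have h1 : sepProduct a * sigmaHom φ₀ = sepProduct a * φ₀ := by
        conv_lhs => rw [← sigma_sep, ← map_mul, ← hPeq]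
        rw [(hermitian_iff P).mp hH, hPeq]
      exact mul_left_cancel₀ hsep0 h1
    · intro b hb
      have hCb : (C b : Polynomial (Polynomial ℂ)) ∣ φ₀ := (C_dvd_iff_dvd_coeff b φ₀).mpr hb
      have hab : (C (a * b) : Polynomial (Polynomial ℂ)) ∣ P := by
        obtain ⟨ψ, hψ⟩ := hCb
        refine ⟨A * ψ, ?_⟩
        rw [hPeq, hψ, sepProduct, ← hA, map_mul]; ring
      have := hgcd (a * b) (fun j => (C_dvd_iff_dvd_coeff _ _).mp hab j)
      have hb1 : b ∣ 1 := by
        rw [← mul_dvd_mul_iff_left ha.ne_zero, mul_one]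
        exact this
      exact isUnit_of_dvd_one hb1
  · intro P φ₀ a ha _hH0 hprim hPeq
    set A : Polynomial (Polynomial ℂ) := (a.map (starRingEnd ℂ)).map C with hA
    have hM : ∀ p : Polynomial ℂ, Prime p → ¬ (C p : Polynomial (Polynomial ℂ)) ∣ A * φ₀ := by
      intro p hp h
      have hpC : Prime (C p : Polynomial (Polynomial ℂ)) := Polynomial.prime_C_iff.mpr hp
      rcases hpC.2.2 _ _ h with h' | h'
      · exact no_prime_dvd_conjmap ha p hp h'
      · exact hp.not_unit (hprim p (fun j => (C_dvd_iff_dvd_coeff _ _).mp h' j))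
    constructor
    · intro j
      have : (C a : Polynomial (Polynomial ℂ)) ∣ P := by
        refine ⟨A * φ₀, ?_⟩
        rw [hPeq, sepProduct, ← hA]; ring
      exact (C_dvd_iff_dvd_coeff _ _).mp this j
    · intro b hb
      have hCb : (C b : Polynomial (Polynomial ℂ)) ∣ P := (C_dvd_iff_dvd_coeff b P).mpr hb
      have : (C b : Polynomial (Polynomial ℂ)) ∣ (A * φ₀) * C a := by
        have e : (A * φ₀) * C a = P := by rw [hPeq, sepProduct, ← hA]; ring
        rwa [e]
      have hba := cancel_lemma (A * φ₀) hM b (C a) this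
      have := (C_dvd_iff_dvd_coeff _ _).mp hba 0
      rwa [coeff_C_zero] at this
end

section
/- For complex x, y in the unit polydisk with |x| + |y| < 1, the Appell F₂ function with parameters a=1, b=b'=1, c=c'=3/2 admits the integral/series identity F₂(1;1,1;3/2,3/2; x, y) = ∑_{k,m≥0} ((1)_{k+m}/((3/2)_k (3/2)_m)) x^k y^m = ∫₀¹∫₀¹ dξ dη / ((1 - x - y) + ξ² x + η² y), where (a)_r = Γ(a+r)/Γ(a) is the Pochhammer symbol. -/
set_option autoImplicit false

open Real intervalIntegral

open MeasureTheory

/-- The Pochhammer symbol `(a)_r = Γ(a+r)/Γ(a)`. -/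
noncomputable def poch (a : ℝ) (r : ℕ) : ℝ := Real.Gamma (a + r) / Real.Gamma a

lemma poch_succ (a : ℝ) (ha : 0 < a) (r : ℕ) : poch a (r + 1) = poch a r * (a + r) := by
  unfold poch
  have h : a + (r : ℝ) ≠ 0 := by positivity
  rw [show a + ((r + 1 : ℕ) : ℝ) = (a + r) + 1 by push_cast; ring, Real.Gamma_add_one h]
  ring

lemma poch_one (r : ℕ) : poch 1 r = r.factorial := by
  induction r with
  | zero => simp [poch]
  | succ n ih =>
      rw [poch_succ 1 one_pos n, ih, Nat.factorial_succ]
      push_cast; ring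

lemma poch_th (k : ℕ) :
    poch (3/2) k = ((2*k+1).factorial : ℝ) / (4 ^ k * k.factorial) := by
  induction k with
  | zero =>
      simp [poch, div_self (Real.Gamma_pos_of_pos (by norm_num : (0:ℝ) < 3/2)).ne']
  | succ n ih =>
      have e1 : (((2*(n+1)+1).factorial : ℕ) : ℝ)
          = (2*n+3) * ((2*n+2) * ((2*n+1).factorial)) := by
        rw [show 2*(n+1)+1 = (2*n+1)+1+1 by ring, Nat.factorial_succ, Nat.factorial_succ]
        push_cast; ring
      have e2 : (((n+1).factorial : ℕ) : ℝ) = (n+1) * n.factorial := by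
        rw [Nat.factorial_succ]; push_cast; ring
      have h1 : ((2*n+1).factorial : ℝ) ≠ 0 := by positivity
      have h2 : ((n).factorial : ℝ) ≠ 0 := by positivity
      rw [poch_succ (3/2) (by norm_num) n, ih, e1, e2]
      field_simp
      ring


lemma hasSum_binom (a b : ℝ) (ha : 0 ≤ a) (hb : 0 ≤ b) (hab : a + b < 1) :
    HasSum (fun p : ℕ × ℕ => ((p.1 + p.2).choose p.1 : ℝ) * a ^ p.1 * b ^ p.2)
      (1 - (a + b))⁻¹ := by
  set F : ℕ × ℕ → ℝ := fun p => ((p.1 + p.2).choose p.1 : ℝ) * a ^ p.1 * b ^ p.2 with hF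
  have hgeo : HasSum (fun n : ℕ => (a + b) ^ n) (1 - (a + b))⁻¹ :=
    hasSum_geometric_of_lt_one (by positivity) hab
  have hfib : ∀ n : ℕ, HasSum (fun c : (Finset.HasAntidiagonal.antidiagonal n : Finset (ℕ × ℕ)) => F c)
      ((a + b) ^ n) := by
    intro n
    have := hasSum_fintype (fun c : (Finset.HasAntidiagonal.antidiagonal n : Finset (ℕ × ℕ)) => F c)
    convert this using 1
    rw [Finset.sum_coe_sort (Finset.HasAntidiagonal.antidiagonal n) F,
      Finset.Nat.sum_antidiagonal_eq_sum_range_succ_mk, add_pow]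
    refine Finset.sum_congr rfl fun k hk => ?_
    have hkn : k ≤ n := Nat.lt_succ_iff.mp (Finset.mem_range.mp hk)
    simp only [hF, Nat.add_sub_cancel' hkn]
    ring
  have hnn : ∀ q : (Σ n : ℕ, (Finset.HasAntidiagonal.antidiagonal n : Finset (ℕ × ℕ))),
      0 ≤ F (Finset.HasAntidiagonal.sigmaAntidiagonalEquivProd q) := by
    intro q
    have : (0:ℝ) ≤ ((((Finset.HasAntidiagonal.sigmaAntidiagonalEquivProd q).1 +
        (Finset.HasAntidiagonal.sigmaAntidiagonalEquivProd q).2).choose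
        (Finset.HasAntidiagonal.sigmaAntidiagonalEquivProd q).1 : ℕ) : ℝ) := Nat.cast_nonneg _
    exact mul_nonneg (mul_nonneg this (pow_nonneg ha _)) (pow_nonneg hb _)
  have hsummable : Summable (F ∘ Finset.HasAntidiagonal.sigmaAntidiagonalEquivProd) := by
    rw [Function.comp_def, summable_sigma_of_nonneg hnn]
    refine ⟨fun n => (hfib n).summable, ?_⟩
    have : (fun n => ∑' c : (Finset.HasAntidiagonal.antidiagonal n : Finset (ℕ × ℕ)), F c)
        = fun n => (a + b) ^ n := funext fun n => (hfib n).tsum_eq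
    exact this ▸ hgeo.summable
  have : HasSum (F ∘ Finset.HasAntidiagonal.sigmaAntidiagonalEquivProd) (1 - (a + b))⁻¹ :=
    hgeo.sigma_of_hasSum (fun n => hfib n) hsummable
  exact (Equiv.hasSum_iff Finset.HasAntidiagonal.sigmaAntidiagonalEquivProd).mp this


lemma cont_pow (k : ℕ) : Continuous fun t : ℝ => (1 - t ^ 2) ^ k := by fun_prop

lemma ck_rec (k : ℕ) :
    (2 * (k:ℝ) + 3) * ∫ ξ in (0:ℝ)..1, (1 - ξ ^ 2) ^ (k + 1)
      = (2 * k + 2) * ∫ ξ in (0:ℝ)..1, (1 - ξ ^ 2) ^ k := by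
  have hderiv : ∀ t ∈ Set.uIcc (0:ℝ) 1, HasDerivAt (fun t : ℝ => t * (1 - t ^ 2) ^ (k + 1))
      ((2 * (k:ℝ) + 3) * (1 - t ^ 2) ^ (k + 1) - (2 * k + 2) * (1 - t ^ 2) ^ k) t := by
    intro t _
    have h1 : HasDerivAt (fun t : ℝ => 1 - t ^ 2) (-(2 * t ^ 1)) t :=
      (hasDerivAt_pow 2 t).const_sub 1
    have h2 := h1.pow (k + 1)
    have h3 : HasDerivAt (fun t : ℝ => t * (1 - t ^ 2) ^ (k + 1))
        (1 * (1 - t ^ 2) ^ (k + 1) + t * (((k + 1 : ℕ) : ℝ) * (1 - t ^ 2) ^ (k + 1 - 1) * -(2 * t ^ 1))) t :=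
      (hasDerivAt_id t).mul h2
    convert h3 using 1
    simp only [Nat.add_sub_cancel, id_eq]
    push_cast
    ring
  have hint : IntervalIntegrable
      (fun t : ℝ => (2 * (k:ℝ) + 3) * (1 - t ^ 2) ^ (k + 1) - (2 * k + 2) * (1 - t ^ 2) ^ k)
      volume 0 1 :=
    ((continuous_const.mul (cont_pow (k+1))).sub
      (continuous_const.mul (cont_pow k))).intervalIntegrable _ _
  have key := intervalIntegral.integral_eq_sub_of_hasDerivAt hderiv hint
  rw [intervalIntegral.integral_sub (f := fun t : ℝ => (2 * (k:ℝ) + 3) * (1 - t ^ 2) ^ (k + 1))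
      (g := fun t : ℝ => (2 * (k:ℝ) + 2) * (1 - t ^ 2) ^ k) ((continuous_const.mul (cont_pow (k+1))).intervalIntegrable _ _)
      ((continuous_const.mul (cont_pow k)).intervalIntegrable _ _),
    intervalIntegral.integral_const_mul, intervalIntegral.integral_const_mul] at key
  simp at key
  linarith [key]

lemma ck_eq (k : ℕ) :
    (∫ ξ in (0:ℝ)..1, (1 - ξ ^ 2) ^ k)
      = 4 ^ k * ((k.factorial : ℝ))^2 / (2 * k + 1).factorial := by
  induction k with
  | zero => simp
  | succ n ih =>
      have key := ck_rec n
      rw [ih] at key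
      have h1 : ((2*n+1).factorial : ℝ) ≠ 0 := by positivity
      have h2 : ((n).factorial : ℝ) ≠ 0 := by positivity
      have e1 : (((2*(n+1)+1).factorial : ℕ) : ℝ)
          = (2*n+3) * ((2*n+2) * ((2*n+1).factorial)) := by
        rw [show 2*(n+1)+1 = (2*n+1)+1+1 by ring, Nat.factorial_succ, Nat.factorial_succ]
        push_cast; ring
      have e2 : (((n+1).factorial : ℕ) : ℝ) = (n+1) * n.factorial := by
        rw [Nat.factorial_succ]; push_cast; ring
      have h3 : (2 * (n:ℝ) + 3) ≠ 0 := by positivity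
      have hI : (∫ ξ in (0:ℝ)..1, (1 - ξ ^ 2) ^ (n+1))
          = ((2*(n:ℝ)+2) * (4^n * (n.factorial:ℝ)^2)) / ((2*n+3) * (2*n+1).factorial) := by
        rw [eq_div_iff (by positivity)]
        field_simp at key
        linear_combination key
      rw [hI, e1, e2]
      push_cast
      rw [div_eq_div_iff (by positivity) (by positivity)]
      ring

/-- Appell `F₂` with parameters `a=1, b=b'=1, c=c'=3/2`: the series
`∑_{k,m≥0} ((1)_{k+m}/((3/2)_k (3/2)_m)) x^k y^m` converges and equals the integral
`∫₀¹∫₀¹ dξ dη / ((1-x-y) + ξ²x + η²y)`. -/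
theorem appell_F2_integral (x y : ℝ) (hx : 0 ≤ x) (hy : 0 ≤ y)
    (hpos : 0 < x + y) (hsum : x + y < 1) :
    HasSum
      (fun p : ℕ × ℕ =>
        poch 1 (p.1 + p.2) / (poch (3 / 2) p.1 * poch (3 / 2) p.2) * x ^ p.1 * y ^ p.2)
      (∫ ξ in (0:ℝ)..1, ∫ η in (0:ℝ)..1,
        1 / ((1 - x - y) + ξ ^ 2 * x + η ^ 2 * y)) := by
  have hc : 0 < 1 - x - y := by linarith
  set s : Set ℝ := Set.Ioc 0 1 with hs
  have hsm : MeasurableSet s := measurableSet_Ioc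
  set D : ℝ × ℝ → ℝ := fun z => (1 - x - y) + z.1 ^ 2 * x + z.2 ^ 2 * y with hD
  have hDpos : ∀ z : ℝ × ℝ, 0 < D z := by
    intro z
    have h1 : 0 ≤ z.1 ^ 2 * x := mul_nonneg (sq_nonneg _) hx
    have h2 : 0 ≤ z.2 ^ 2 * y := mul_nonneg (sq_nonneg _) hy
    simp only [hD]; linarith
  have hDcont : Continuous D := by fun_prop
  have hInvCont : Continuous fun z => 1 / D z :=
    continuous_const.div hDcont fun z => (hDpos z).ne'
  have hsubset : s ×ˢ s ⊆ Set.Icc (0:ℝ) 1 ×ˢ Set.Icc (0:ℝ) 1 :=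
    Set.prod_mono Set.Ioc_subset_Icc_self Set.Ioc_subset_Icc_self
  have hcompact : IsCompact (Set.Icc (0:ℝ) 1 ×ˢ Set.Icc (0:ℝ) 1) :=
    isCompact_Icc.prod isCompact_Icc
  have hIntInv : IntegrableOn (fun z => 1 / D z) (s ×ˢ s) volume :=
    (hInvCont.continuousOn.integrableOn_compact hcompact).mono_set hsubset
  -- iterated integral = set integral over product
  have hiter : (∫ ξ in (0:ℝ)..1, ∫ η in (0:ℝ)..1,
        1 / ((1 - x - y) + ξ ^ 2 * x + η ^ 2 * y))
      = ∫ z in s ×ˢ s, 1 / D z := by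
    rw [intervalIntegral.integral_of_le zero_le_one]
    have h1 : ∀ ξ : ℝ, (∫ η in (0:ℝ)..1, 1 / ((1 - x - y) + ξ ^ 2 * x + η ^ 2 * y))
        = ∫ η in s, 1 / D (ξ, η) := fun ξ => intervalIntegral.integral_of_le zero_le_one
    simp_rw [h1]
    rw [MeasureTheory.Measure.volume_eq_prod ℝ ℝ] at hIntInv ⊢
    exact (MeasureTheory.setIntegral_prod _ hIntInv).symm
  -- the summand functions
  set F : ℕ × ℕ → ℝ × ℝ → ℝ := fun p z =>
    ((p.1 + p.2).choose p.1 : ℝ) * ((1 - z.1 ^ 2) * x) ^ p.1 * ((1 - z.2 ^ 2) * y) ^ p.2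
    with hF
  have hFcont : ∀ p, Continuous (F p) := by intro p; simp only [hF]; fun_prop
  have hFint : ∀ p, Integrable (F p) (volume.restrict (s ×ˢ s)) := by
    intro p
    rw [← IntegrableOn]
    exact ((hFcont p).continuousOn.integrableOn_compact hcompact).mono_set hsubset
  -- nonnegativity on the square
  have hone : ∀ t : ℝ, t ∈ s → 0 ≤ 1 - t ^ 2 := by
    intro t ht
    have : t ^ 2 ≤ 1 := pow_le_one₀ ht.1.le ht.2
    linarith
  have hFnn : ∀ p, ∀ z ∈ s ×ˢ s, 0 ≤ F p z := by
    intro p z hz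
    have h1 := hone z.1 hz.1
    have h2 := hone z.2 hz.2
    have : (0:ℝ) ≤ (((p.1 + p.2).choose p.1 : ℕ) : ℝ) := Nat.cast_nonneg _
    exact mul_nonneg (mul_nonneg this (pow_nonneg (mul_nonneg h1 hx) _))
      (pow_nonneg (mul_nonneg h2 hy) _)
  -- value of each integral
  have hck : ∀ k : ℕ, (∫ t in s, (1 - t ^ 2) ^ k) = ∫ t in (0:ℝ)..1, (1 - t ^ 2) ^ k :=
    fun k => (intervalIntegral.integral_of_le zero_le_one).symm
  have hval : ∀ p : ℕ × ℕ, (∫ z in s ×ˢ s, F p z)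
      = ((p.1 + p.2).choose p.1 : ℝ) * (x ^ p.1 * ∫ t in (0:ℝ)..1, (1 - t ^ 2) ^ p.1)
          * (y ^ p.2 * ∫ t in (0:ℝ)..1, (1 - t ^ 2) ^ p.2) := by
    intro p
    have : ∀ z : ℝ × ℝ, F p z =
        (((p.1 + p.2).choose p.1 : ℝ) * ((1 - z.1 ^ 2) * x) ^ p.1)
          * ((1 - z.2 ^ 2) * y) ^ p.2 := fun z => rfl
    simp_rw [this]
    rw [MeasureTheory.Measure.volume_eq_prod ℝ ℝ, MeasureTheory.setIntegral_prod_mul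
      (f := fun a : ℝ => ((p.1 + p.2).choose p.1 : ℝ) * ((1 - a ^ 2) * x) ^ p.1)
      (g := fun b : ℝ => ((1 - b ^ 2) * y) ^ p.2)]
    rw [MeasureTheory.integral_const_mul]
    simp_rw [mul_pow]
    rw [MeasureTheory.integral_mul_const, MeasureTheory.integral_mul_const, hck, hck]
    ring
  -- summability of the norms
  have hnorm : ∀ p : ℕ × ℕ, (∫ z in s ×ˢ s, ‖F p z‖) = ∫ z in s ×ˢ s, F p z := by
    intro p
    exact MeasureTheory.setIntegral_congr_fun (hsm.prod hsm)
      fun z hz => Real.norm_of_nonneg (hFnn p z hz)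
  have hck_nonneg : ∀ k : ℕ, 0 ≤ ∫ t in (0:ℝ)..1, (1 - t ^ 2) ^ k := by
    intro k
    refine intervalIntegral.integral_nonneg zero_le_one fun u hu => ?_
    have h2 : u ^ 2 ≤ 1 := pow_le_one₀ hu.1 hu.2
    exact pow_nonneg (by linarith) _
  have hck_le_one : ∀ k : ℕ, (∫ t in (0:ℝ)..1, (1 - t ^ 2) ^ k) ≤ 1 := by
    intro k
    have h := intervalIntegral.integral_mono_on (μ := volume) (f := fun t : ℝ => (1 - t ^ 2) ^ k)
      (g := fun _ : ℝ => (1:ℝ)) zero_le_one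
      ((cont_pow k).intervalIntegrable _ _) (intervalIntegrable_const)
      (fun u hu => by
        have h2 : u ^ 2 ≤ 1 := pow_le_one₀ hu.1 hu.2
        have h0 : 0 ≤ 1 - u ^ 2 := by linarith
        calc (1 - u ^ 2) ^ k ≤ 1 ^ k :=
              pow_le_pow_left₀ h0 (by nlinarith [sq_nonneg u]) k
        _ = 1 := one_pow k)
    simpa using h
  have hFsum : Summable fun p : ℕ × ℕ => ∫ z in s ×ˢ s, ‖F p z‖ := by
    simp_rw [hnorm, hval]
    refine Summable.of_nonneg_of_le ?_ ?_ (hasSum_binom x y hx hy hsum).summable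
    · intro p
      have h1 := hck_nonneg p.1; have h2 := hck_nonneg p.2
      have hx1 : (0:ℝ) ≤ x ^ p.1 := pow_nonneg hx _
      have hy1 : (0:ℝ) ≤ y ^ p.2 := pow_nonneg hy _
      have hC : (0:ℝ) ≤ (((p.1 + p.2).choose p.1 : ℕ) : ℝ) := Nat.cast_nonneg _
      exact mul_nonneg (mul_nonneg hC (mul_nonneg hx1 h1)) (mul_nonneg hy1 h2)
    · intro p
      have h1 := hck_nonneg p.1; have h2 := hck_nonneg p.2
      have h3 := hck_le_one p.1; have h4 := hck_le_one p.2
      have hx1 : (0:ℝ) ≤ x ^ p.1 := pow_nonneg hx _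
      have hy1 : (0:ℝ) ≤ y ^ p.2 := pow_nonneg hy _
      have hC : (0:ℝ) ≤ (((p.1 + p.2).choose p.1 : ℕ) : ℝ) := Nat.cast_nonneg _
      have hAB : (∫ t in (0:ℝ)..1, (1 - t ^ 2) ^ p.1) *
          (∫ t in (0:ℝ)..1, (1 - t ^ 2) ^ p.2) ≤ 1 := mul_le_one₀ h3 h2 h4
      calc ((p.1 + p.2).choose p.1 : ℝ) * (x ^ p.1 * ∫ t in (0:ℝ)..1, (1 - t ^ 2) ^ p.1)
            * (y ^ p.2 * ∫ t in (0:ℝ)..1, (1 - t ^ 2) ^ p.2)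
          = (((p.1 + p.2).choose p.1 : ℝ) * x ^ p.1 * y ^ p.2) *
            ((∫ t in (0:ℝ)..1, (1 - t ^ 2) ^ p.1) *
              (∫ t in (0:ℝ)..1, (1 - t ^ 2) ^ p.2)) := by ring
        _ ≤ (((p.1 + p.2).choose p.1 : ℝ) * x ^ p.1 * y ^ p.2) * 1 :=
            mul_le_mul_of_nonneg_left hAB
              (mul_nonneg (mul_nonneg hC hx1) hy1)
        _ = ((p.1 + p.2).choose p.1 : ℝ) * x ^ p.1 * y ^ p.2 := mul_one _
  -- the interchange
  have H := MeasureTheory.hasSum_integral_of_summable_integral_norm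
    (μ := volume.restrict (s ×ˢ s)) hFint hFsum
  -- pointwise sum of the series
  have htsum : ∀ z ∈ s ×ˢ s, (∑' p : ℕ × ℕ, F p z) = 1 / D z := by
    intro z hz
    have h1 := hone z.1 hz.1
    have h2 := hone z.2 hz.2
    have h1' : (1 - z.1 ^ 2) * x ≤ x := by nlinarith [sq_nonneg z.1]
    have h2' : (1 - z.2 ^ 2) * y ≤ y := by nlinarith [sq_nonneg z.2]
    have hb := hasSum_binom ((1 - z.1 ^ 2) * x) ((1 - z.2 ^ 2) * y)
      (mul_nonneg h1 hx) (mul_nonneg h2 hy) (by linarith)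
    rw [hb.tsum_eq, one_div]
    congr 1
    simp only [hD]; ring
  have hcongr : (∫ z in s ×ˢ s, ∑' p : ℕ × ℕ, F p z) = ∫ z in s ×ˢ s, 1 / D z :=
    MeasureTheory.setIntegral_congr_fun (hsm.prod hsm) htsum
  rw [hcongr] at H
  -- identify the coefficients
  have hfun : (fun p : ℕ × ℕ =>
      poch 1 (p.1 + p.2) / (poch (3 / 2) p.1 * poch (3 / 2) p.2) * x ^ p.1 * y ^ p.2)
      = fun p : ℕ × ℕ => ∫ z in s ×ˢ s, F p z := by
    funext p
    obtain ⟨k, m⟩ := p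
    rw [hval, poch_one, poch_th, poch_th, ck_eq, ck_eq]
    have e1 : ((k + m).choose k : ℝ) = ((k + m).factorial : ℝ) /
        (k.factorial * m.factorial) := by
      rw [Nat.cast_choose ℝ (Nat.le_add_right k m), Nat.add_sub_cancel_left]
    simp only
    rw [e1]
    have n1 : ((2*k+1).factorial : ℝ) ≠ 0 := by positivity
    have n2 : ((2*m+1).factorial : ℝ) ≠ 0 := by positivity
    have n3 : ((k).factorial : ℝ) ≠ 0 := by positivity
    have n4 : ((m).factorial : ℝ) ≠ 0 := by positivity
    field_simp
  rw [hfun, hiter]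
  exact H
end
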